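/- arXiv:1402.1333 — 3 statements merged into one kernel-verified Lean document; each statement's English description precedes it below -/
import Mathlib

section
/- In characteristic p, the Euler operator θ_{p^e} = t^{p^e} ∂_t^{[p^e]} on R[t] satisfies Π_{j=0}^{p-1} (θ_{p^e} + j) = 0 as an endomorphism of R[t]. -/
open Polynomial

/-- The divided power operator `∂_t^[m]` on `R[t]` (the `m`-th Hasse derivative). -/
noncomputable def divPow (R : Type*) [CommRing R] (m : ℕ) : Module.End R (Polynomial R) :=
  Polynomial.hasseDeriv m

/-- The divided power Euler operator `θ_m = t^m ∂_t^[m]` on `R[t]`,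
sending `t^n` to `C(n,m) t^n`. -/
noncomputable def thetaOp (R : Type*) [CommRing R] (m : ℕ) : Module.End R (Polynomial R) :=
  (LinearMap.mulLeft R (Polynomial.X ^ m)) * divPow R m

lemma thetaOp_monomial (R : Type*) [CommRing R] (m n : ℕ) (a : R) :
    thetaOp R m (monomial n a) = monomial n ((n.choose m : R) * a) := by
  simp only [thetaOp, divPow, Module.End.mul_apply, hasseDeriv_monomial,
    LinearMap.mulLeft_apply]
  rcases le_or_gt m n with h | h
  · rw [X_pow_mul, monomial_mul_X_pow, Nat.sub_add_cancel h]
  · rw [Nat.choose_eq_zero_of_lt h]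
    simp

lemma prod_apply_monomial (R : Type*) [CommRing R] (m : ℕ) (L : List ℕ) (n : ℕ) (a : R) :
    ((L.map (fun j : ℕ => thetaOp R m + (j : Module.End R (Polynomial R)))).prod)
      (monomial n a) = monomial n ((L.map (fun j : ℕ => ((n.choose m + j : ℕ) : R))).prod * a) := by
  induction L with
  | nil => simp
  | cons j t ih =>
    simp only [List.map_cons, List.prod_cons, Module.End.mul_apply, ih, LinearMap.add_apply,
      thetaOp_monomial, Module.End.natCast_apply, nsmul_eq_mul]
    rw [← Polynomial.C_eq_natCast, Polynomial.C_mul_monomial, ← (monomial n).map_add]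
    congr 1
    push_cast
    ring

/-- In characteristic `p`, the Euler operator `θ_{p^e} = t^{p^e} ∂_t^[p^e]` on `R[t]`
satisfies `∏_{j=0}^{p-1} (θ_{p^e} + j) = 0` as an endomorphism of `R[t]`. -/
theorem prod_theta_add_const_eq_zero (R : Type*) [CommRing R] (p : ℕ) [Fact p.Prime]
    [CharP R p] (e : ℕ) :
    (((List.range p).map
        (fun j : ℕ => thetaOp R (p ^ e) + (j : Module.End R (Polynomial R)))).prod) = 0 := by
  apply Polynomial.lhom_ext'
  intro n
  ext a
  simp only [LinearMap.comp_apply, LinearMap.zero_apply, prod_apply_monomial]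
  set c := n.choose (p ^ e) with hc
  have hp : 0 < p := (Fact.out : p.Prime).pos
  have key : ((((List.range p).map (fun j : ℕ => ((c + j : ℕ) : R))).prod)) = 0 := by
    have : ((List.range p).map (fun j : ℕ => ((c + j : ℕ) : R))).prod
        = ((((List.range p).map (fun j : ℕ => c + j)).prod : ℕ) : R) := by
      rw [Nat.cast_list_prod, List.map_map]; rfl
    rw [this]
    have hdvd : p ∣ ((List.range p).map (fun j : ℕ => c + j)).prod := by
      set j := (p - c % p) % p with hj
      have hjlt : j < p := Nat.mod_lt _ hp
      have hmem : c + j ∈ (List.range p).map (fun j : ℕ => c + j) :=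
        List.mem_map.mpr ⟨j, List.mem_range.mpr hjlt, rfl⟩
      have hpd : p ∣ c + j := by
        have h1 : c % p < p := Nat.mod_lt _ hp
        have h2 : (c + j) % p = 0 := by
          rcases Nat.eq_zero_or_pos (c % p) with h | h
          · simp [hj, h, Nat.add_mod, Nat.mod_self]
          · have hjeq : j = p - c % p := by rw [hj, Nat.mod_eq_of_lt (by omega)]
            have hsum : c % p + j = p := by omega
            rw [Nat.add_mod, Nat.mod_eq_of_lt hjlt, hsum, Nat.mod_self]
        exact Nat.dvd_of_mod_eq_zero h2
      exact dvd_trans hpd (List.dvd_prod hmem)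
    exact (CharP.cast_eq_zero_iff R p _).mpr hdvd
  rw [key, zero_mul, monomial_zero_right]
end

section
/- Let I be a directed index set and (M_i), (N_i), (R_i) directed systems where each R_i is a commutative ring, M_i and N_i are R_i-modules, and the transition maps are compatible. Then there is a natural isomorphism colim_i (M_i ⊗_{R_i} N_i) ≅ (colim_i M_i) ⊗_{colim_i R_i} (colim_i N_i). -/
open TensorProduct

namespace DLT

set_option linter.unusedSectionVars false

section Aux

variable {ι : Type*} [Preorder ι] [IsDirected ι (· ≤ ·)]
    [DecidableEq ι] [Nonempty ι]

/-- upper bound of a pair -/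
noncomputable def ub (i j : ι) : ι := (directed_of (· ≤ ·) i j).choose

theorem le_ub_left (i j : ι) : i ≤ ub i j := (directed_of (· ≤ ·) i j).choose_spec.1
theorem le_ub_right (i j : ι) : j ≤ ub i j := (directed_of (· ≤ ·) i j).choose_spec.2

variable
    {R : ι → Type*} [∀ i, CommRing (R i)]
    {M N : ι → Type*} [∀ i, AddCommGroup (M i)] [∀ i, AddCommGroup (N i)]
    [∀ i, Module (R i) (M i)] [∀ i, Module (R i) (N i)]
    {fR : ∀ i j, i ≤ j → R i →+* R j}
    {fM : ∀ i j, i ≤ j → M i →+ M j} {fN : ∀ i j, i ≤ j → N i →+ N j}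
    {fT : ∀ i j, i ≤ j →
      (TensorProduct (R i) (M i) (N i)) →+ TensorProduct (R j) (M j) (N j)}
    [DirectedSystem R fun i j h => fR i j h]
    [DirectedSystem M fun i j h => fM i j h]
    [DirectedSystem N fun i j h => fN i j h]
    [DirectedSystem (fun i => TensorProduct (R i) (M i) (N i)) fun i j h => fT i j h]

variable (hT : ∀ i j (h : i ≤ j) (m : M i) (n : N i),
      fT i j h (m ⊗ₜ[R i] n) = fM i j h m ⊗ₜ[R j] fN i j h n)

include hT in
theorem key
    {i j k k' : ι} (hik : i ≤ k) (hjk : j ≤ k) (hik' : i ≤ k') (hjk' : j ≤ k')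
    (m : M i) (n : N j) :
    AddCommGroup.DirectLimit.of (fun i => TensorProduct (R i) (M i) (N i)) fT k
        (fM i k hik m ⊗ₜ[R k] fN j k hjk n) =
      AddCommGroup.DirectLimit.of (fun i => TensorProduct (R i) (M i) (N i)) fT k'
        (fM i k' hik' m ⊗ₜ[R k'] fN j k' hjk' n) := by
  obtain ⟨l, hkl, hk'l⟩ := directed_of (· ≤ ·) k k'
  rw [← AddCommGroup.DirectLimit.of_f (f := fT) hkl,
      ← AddCommGroup.DirectLimit.of_f (f := fT) hk'l, hT, hT,
      DirectedSystem.map_map (f := fun i j h => fM i j h) hik hkl,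
      DirectedSystem.map_map (f := fun i j h => fN i j h) hjk hkl,
      DirectedSystem.map_map (f := fun i j h => fM i j h) hik' hk'l,
      DirectedSystem.map_map (f := fun i j h => fN i j h) hjk' hk'l]

/-- the inner component map `N j →+ T∞` for a fixed `m : M i`. -/
noncomputable def inner (hT : ∀ i j (h : i ≤ j) (m : M i) (n : N i),
      fT i j h (m ⊗ₜ[R i] n) = fM i j h m ⊗ₜ[R j] fN i j h n) (i : ι) (m : M i) (j : ι) :
    N j →+ AddCommGroup.DirectLimit (fun i => TensorProduct (R i) (M i) (N i)) fT :=
  ((AddCommGroup.DirectLimit.of (fun i => TensorProduct (R i) (M i) (N i)) fT (ub i j)).comp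
    (TensorProduct.mk (R (ub i j)) (M (ub i j)) (N (ub i j))
      (fM i (ub i j) (le_ub_left i j) m)).toAddMonoidHom).comp (fN j (ub i j) (le_ub_right i j))

theorem inner_apply (i : ι) (m : M i) (j : ι) (n : N j) :
    inner hT i m j n =
      AddCommGroup.DirectLimit.of (fun i => TensorProduct (R i) (M i) (N i)) fT (ub i j)
        (fM i (ub i j) (le_ub_left i j) m ⊗ₜ[R (ub i j)]
          fN j (ub i j) (le_ub_right i j) n) := rfl

/-- `B(of m, -) : N∞ →+ T∞`. -/
noncomputable def half (hT : ∀ i j (h : i ≤ j) (m : M i) (n : N i),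
      fT i j h (m ⊗ₜ[R i] n) = fM i j h m ⊗ₜ[R j] fN i j h n) (i : ι) (m : M i) :
    AddCommGroup.DirectLimit N fN →+
      AddCommGroup.DirectLimit (fun i => TensorProduct (R i) (M i) (N i)) fT :=
  AddCommGroup.DirectLimit.lift N fN _ (fun j => inner hT i m j)
    (by
      intro j j' hjj' n
      rw [inner_apply, inner_apply,
        DirectedSystem.map_map (f := fun i j h => fN i j h) hjj' (le_ub_right i j')]
      exact key hT _ _ _ _ m n)

theorem half_of (i : ι) (m : M i) (j : ι) (n : N j) :
    half hT i m (AddCommGroup.DirectLimit.of N fN j n) =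
      AddCommGroup.DirectLimit.of (fun i => TensorProduct (R i) (M i) (N i)) fT (ub i j)
        (fM i (ub i j) (le_ub_left i j) m ⊗ₜ[R (ub i j)]
          fN j (ub i j) (le_ub_right i j) n) :=
  AddCommGroup.DirectLimit.lift_of _ _ _ _ _

/-- `B : M∞ →+ N∞ →+ T∞`. -/
noncomputable def B (hT : ∀ i j (h : i ≤ j) (m : M i) (n : N i),
      fT i j h (m ⊗ₜ[R i] n) = fM i j h m ⊗ₜ[R j] fN i j h n) :
    AddCommGroup.DirectLimit M fM →+ (AddCommGroup.DirectLimit N fN →+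
      AddCommGroup.DirectLimit (fun i => TensorProduct (R i) (M i) (N i)) fT) :=
  AddCommGroup.DirectLimit.lift M fM _
    (fun i => AddMonoidHom.mk' (fun m => half hT i m) (by
      intro m m'
      refine AddMonoidHom.ext fun x => ?_
      refine AddCommGroup.DirectLimit.induction_on x fun j n => ?_
      simp only [AddMonoidHom.add_apply, half_of, map_add, add_tmul]))
    (by
      intro i i' hii' m
      refine AddMonoidHom.ext fun x => ?_
      refine AddCommGroup.DirectLimit.induction_on x fun j n => ?_
      simp only [AddMonoidHom.mk'_apply, half_of,
        DirectedSystem.map_map (f := fun i j h => fM i j h) hii' (le_ub_left i' j)]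
      exact key hT _ _ _ _ m n)

theorem B_of (i j : ι) (m : M i) (n : N j) :
    B hT (AddCommGroup.DirectLimit.of M fM i m) (AddCommGroup.DirectLimit.of N fN j n) =
      AddCommGroup.DirectLimit.of (fun i => TensorProduct (R i) (M i) (N i)) fT (ub i j)
        (fM i (ub i j) (le_ub_left i j) m ⊗ₜ[R (ub i j)]
          fN j (ub i j) (le_ub_right i j) n) := by
  unfold B
  rw [AddCommGroup.DirectLimit.lift_of]
  exact half_of hT i m j n

theorem B_of_same (i : ι) (m : M i) (n : N i) :
    B hT (AddCommGroup.DirectLimit.of M fM i m) (AddCommGroup.DirectLimit.of N fN i n) =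
      AddCommGroup.DirectLimit.of (fun i => TensorProduct (R i) (M i) (N i)) fT i
        (m ⊗ₜ[R i] n) := by
  rw [B_of hT i i m n, key hT (le_ub_left i i) (le_ub_right i i) le_rfl le_rfl m n,
    DirectedSystem.map_self (f := fun i j h => fM i j h),
    DirectedSystem.map_self (f := fun i j h => fN i j h)]


section Balance

variable [instMM : Module (Ring.DirectLimit R fun i j h => fR i j h)
      (AddCommGroup.DirectLimit M fM)]
    [instNN : Module (Ring.DirectLimit R fun i j h => fR i j h)
      (AddCommGroup.DirectLimit N fN)]
    (hSM : ∀ i (r : R i) (m : M i),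
      Ring.DirectLimit.of R (fun i j h => fR i j h) i r •
          AddCommGroup.DirectLimit.of M fM i m =
        AddCommGroup.DirectLimit.of M fM i (r • m))
    (hSN : ∀ i (r : R i) (n : N i),
      Ring.DirectLimit.of R (fun i j h => fR i j h) i r •
          AddCommGroup.DirectLimit.of N fN i n =
        AddCommGroup.DirectLimit.of N fN i (r • n))
    (hM : ∀ i j (h : i ≤ j) (r : R i) (m : M i),
      fM i j h (r • m) = fR i j h r • fM i j h m)
    (hN : ∀ i j (h : i ≤ j) (r : R i) (n : N i),
      fN i j h (r • n) = fR i j h r • fN i j h n)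

include hSM hSN hM hN

theorem B_balance (s : Ring.DirectLimit R fun i j h => fR i j h)
    (x : AddCommGroup.DirectLimit M fM) (y : AddCommGroup.DirectLimit N fN) :
    B hT (s • x) y = B hT x (s • y) := by
  refine Ring.DirectLimit.induction_on s fun i0 r => ?_
  refine AddCommGroup.DirectLimit.induction_on x fun i m => ?_
  refine AddCommGroup.DirectLimit.induction_on y fun j n => ?_
  have h0 : i0 ≤ ub (ub i0 i) j := le_trans (le_ub_left i0 i) (le_ub_left (ub i0 i) j)
  have hi : i ≤ ub (ub i0 i) j := le_trans (le_ub_right i0 i) (le_ub_left (ub i0 i) j)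
  have hj : j ≤ ub (ub i0 i) j := le_ub_right (ub i0 i) j
  rw [← Ring.DirectLimit.of_f (f := fun i j h => fR i j h) h0 r,
    ← AddCommGroup.DirectLimit.of_f (f := fM) hi m,
    ← AddCommGroup.DirectLimit.of_f (f := fN) hj n,
    hSM, hSN, B_of_same, B_of_same, TensorProduct.smul_tmul]

end Balance

section Forward

variable [instMM : Module (Ring.DirectLimit R fun i j h => fR i j h)
      (AddCommGroup.DirectLimit M fM)]
    [instNN : Module (Ring.DirectLimit R fun i j h => fR i j h)
      (AddCommGroup.DirectLimit N fN)]

/-- the component map `T i →+ M∞ ⊗_S N∞`. -/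
noncomputable def phi
    (hSM : ∀ i (r : R i) (m : M i),
      Ring.DirectLimit.of R (fun i j h => fR i j h) i r •
          AddCommGroup.DirectLimit.of M fM i m =
        AddCommGroup.DirectLimit.of M fM i (r • m))
    (hSN : ∀ i (r : R i) (n : N i),
      Ring.DirectLimit.of R (fun i j h => fR i j h) i r •
          AddCommGroup.DirectLimit.of N fN i n =
        AddCommGroup.DirectLimit.of N fN i (r • n))
    (i : ι) :
    TensorProduct (R i) (M i) (N i) →+
      TensorProduct (Ring.DirectLimit R fun i j h => fR i j h)
        (AddCommGroup.DirectLimit M fM) (AddCommGroup.DirectLimit N fN) :=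
  TensorProduct.liftAddHom
    (AddMonoidHom.mk' (fun m => AddMonoidHom.mk'
        (fun n => AddCommGroup.DirectLimit.of M fM i m ⊗ₜ AddCommGroup.DirectLimit.of N fN i n)
        (fun n n' => by simp [TensorProduct.tmul_add]))
      (fun m m' => by ext n; simp [TensorProduct.add_tmul]))
    (fun r m n => by
      simp only [AddMonoidHom.mk'_apply, ← hSM, ← hSN, TensorProduct.smul_tmul])

theorem phi_tmul (hSM : ∀ i (r : R i) (m : M i),
      Ring.DirectLimit.of R (fun i j h => fR i j h) i r •
          AddCommGroup.DirectLimit.of M fM i m =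
        AddCommGroup.DirectLimit.of M fM i (r • m))
    (hSN : ∀ i (r : R i) (n : N i),
      Ring.DirectLimit.of R (fun i j h => fR i j h) i r •
          AddCommGroup.DirectLimit.of N fN i n =
        AddCommGroup.DirectLimit.of N fN i (r • n)) (i : ι) (m : M i) (n : N i) :
    phi (fM := fM) (fN := fN) hSM hSN i (m ⊗ₜ[R i] n) =
      AddCommGroup.DirectLimit.of M fM i m ⊗ₜ AddCommGroup.DirectLimit.of N fN i n := rfl

/-- the forward map `T∞ →+ M∞ ⊗_S N∞`. -/
noncomputable def e
    (hT : ∀ i j (h : i ≤ j) (m : M i) (n : N i),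
      fT i j h (m ⊗ₜ[R i] n) = fM i j h m ⊗ₜ[R j] fN i j h n)
    (hSM : ∀ i (r : R i) (m : M i),
      Ring.DirectLimit.of R (fun i j h => fR i j h) i r •
          AddCommGroup.DirectLimit.of M fM i m =
        AddCommGroup.DirectLimit.of M fM i (r • m))
    (hSN : ∀ i (r : R i) (n : N i),
      Ring.DirectLimit.of R (fun i j h => fR i j h) i r •
          AddCommGroup.DirectLimit.of N fN i n =
        AddCommGroup.DirectLimit.of N fN i (r • n)) :
    AddCommGroup.DirectLimit (fun i => TensorProduct (R i) (M i) (N i)) fT →+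
      TensorProduct (Ring.DirectLimit R fun i j h => fR i j h)
        (AddCommGroup.DirectLimit M fM) (AddCommGroup.DirectLimit N fN) :=
  AddCommGroup.DirectLimit.lift _ fT _ (fun i => phi hSM hSN i)
    (by
      intro i j hij t
      refine t.induction_on (by simp) (fun m n => ?_) (fun a b ha hb => by
        simp only [map_add, ha, hb])
      show phi hSM hSN j _ = phi hSM hSN i _
      rw [hT, phi_tmul, phi_tmul,
        AddCommGroup.DirectLimit.of_f (f := fM), AddCommGroup.DirectLimit.of_f (f := fN)])

theorem e_of_tmul (hT : ∀ i j (h : i ≤ j) (m : M i) (n : N i),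
      fT i j h (m ⊗ₜ[R i] n) = fM i j h m ⊗ₜ[R j] fN i j h n)
    (hSM : ∀ i (r : R i) (m : M i),
      Ring.DirectLimit.of R (fun i j h => fR i j h) i r •
          AddCommGroup.DirectLimit.of M fM i m =
        AddCommGroup.DirectLimit.of M fM i (r • m))
    (hSN : ∀ i (r : R i) (n : N i),
      Ring.DirectLimit.of R (fun i j h => fR i j h) i r •
          AddCommGroup.DirectLimit.of N fN i n =
        AddCommGroup.DirectLimit.of N fN i (r • n)) (i : ι) (m : M i) (n : N i) :
    e (fR := fR) hT hSM hSN (AddCommGroup.DirectLimit.of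
        (fun i => TensorProduct (R i) (M i) (N i)) fT i (m ⊗ₜ[R i] n)) =
      AddCommGroup.DirectLimit.of M fM i m ⊗ₜ AddCommGroup.DirectLimit.of N fN i n := by
  unfold e
  rw [AddCommGroup.DirectLimit.lift_of]
  rfl

end Forward


section Main

variable [instMM : Module (Ring.DirectLimit R fun i j h => fR i j h)
      (AddCommGroup.DirectLimit M fM)]
    [instNN : Module (Ring.DirectLimit R fun i j h => fR i j h)
      (AddCommGroup.DirectLimit N fN)]
    (hSM : ∀ i (r : R i) (m : M i),
      Ring.DirectLimit.of R (fun i j h => fR i j h) i r •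
          AddCommGroup.DirectLimit.of M fM i m =
        AddCommGroup.DirectLimit.of M fM i (r • m))
    (hSN : ∀ i (r : R i) (n : N i),
      Ring.DirectLimit.of R (fun i j h => fR i j h) i r •
          AddCommGroup.DirectLimit.of N fN i n =
        AddCommGroup.DirectLimit.of N fN i (r • n))
    (hM : ∀ i j (h : i ≤ j) (r : R i) (m : M i),
      fM i j h (r • m) = fR i j h r • fM i j h m)
    (hN : ∀ i j (h : i ≤ j) (r : R i) (n : N i),
      fN i j h (r • n) = fR i j h r • fN i j h n)

theorem left_inv (z : AddCommGroup.DirectLimit (fun i => TensorProduct (R i) (M i) (N i)) fT) :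
    TensorProduct.liftAddHom (B hT) (fun s x y => B_balance hT hSM hSN hM hN s x y)
      (e hT hSM hSN z) = z := by
  refine AddCommGroup.DirectLimit.induction_on z fun i t => ?_
  refine t.induction_on (by simp) (fun m n => ?_) (fun a b ha hb => by
    simp only [map_add, ha, hb])
  rw [e_of_tmul hT hSM hSN, TensorProduct.liftAddHom_tmul, B_of_same hT]

theorem right_inv (w : TensorProduct (Ring.DirectLimit R fun i j h => fR i j h)
      (AddCommGroup.DirectLimit M fM) (AddCommGroup.DirectLimit N fN)) :
    e hT hSM hSN (TensorProduct.liftAddHom (B hT)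
      (fun s x y => B_balance hT hSM hSN hM hN s x y) w) = w := by
  refine w.induction_on (by simp) (fun x y => ?_) (fun a b ha hb => by
    simp only [map_add, ha, hb])
  refine AddCommGroup.DirectLimit.induction_on x fun i m => ?_
  refine AddCommGroup.DirectLimit.induction_on y fun j n => ?_
  rw [← AddCommGroup.DirectLimit.of_f (f := fM) (le_ub_left i j) m,
    ← AddCommGroup.DirectLimit.of_f (f := fN) (le_ub_right i j) n,
    TensorProduct.liftAddHom_tmul, B_of_same hT, e_of_tmul hT hSM hSN]

end Main

end Aux

end DLT

/-- Let `I` be a directed index set, `(R_i)` a directed system of commutative rings,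
and `(M_i)`, `(N_i)` directed systems of modules over them (the module transition maps
being additive and semilinear over the ring transition maps); let `(M_i ⊗_{R_i} N_i)`
be the induced directed system of tensor products.  Let `S = colim R_i` and let the
colimits `colim M_i`, `colim N_i` carry their canonical `S`-module structures
(characterized by compatibility with the structural maps).  Then there is a natural
isomorphism `colim (M_i ⊗_{R_i} N_i) ≅ (colim M_i) ⊗_S (colim N_i)`, compatible with
the canonical maps from the components. -/
theorem directLimit_tensorProduct {ι : Type*} [Preorder ι] [IsDirected ι (· ≤ ·)]
    [DecidableEq ι] [Nonempty ι]
    (R : ι → Type*) [∀ i, CommRing (R i)]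
    (M N : ι → Type*) [∀ i, AddCommGroup (M i)] [∀ i, AddCommGroup (N i)]
    [∀ i, Module (R i) (M i)] [∀ i, Module (R i) (N i)]
    (fR : ∀ i j, i ≤ j → R i →+* R j)
    (fM : ∀ i j, i ≤ j → M i →+ M j) (fN : ∀ i j, i ≤ j → N i →+ N j)
    (fT : ∀ i j, i ≤ j →
      (TensorProduct (R i) (M i) (N i)) →+ TensorProduct (R j) (M j) (N j))
    [DirectedSystem R fun i j h => fR i j h]
    [DirectedSystem M fun i j h => fM i j h]
    [DirectedSystem N fun i j h => fN i j h]
    [DirectedSystem (fun i => TensorProduct (R i) (M i) (N i)) fun i j h => fT i j h]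
    (hM : ∀ i j (h : i ≤ j) (r : R i) (m : M i),
      fM i j h (r • m) = fR i j h r • fM i j h m)
    (hN : ∀ i j (h : i ≤ j) (r : R i) (n : N i),
      fN i j h (r • n) = fR i j h r • fN i j h n)
    (hT : ∀ i j (h : i ≤ j) (m : M i) (n : N i),
      fT i j h (m ⊗ₜ[R i] n) = fM i j h m ⊗ₜ[R j] fN i j h n)
    [instMM : Module (Ring.DirectLimit R fun i j h => fR i j h)
      (AddCommGroup.DirectLimit M fM)]
    [instNN : Module (Ring.DirectLimit R fun i j h => fR i j h)
      (AddCommGroup.DirectLimit N fN)]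
    (hSM : ∀ i (r : R i) (m : M i),
      Ring.DirectLimit.of R (fun i j h => fR i j h) i r •
          AddCommGroup.DirectLimit.of M fM i m =
        AddCommGroup.DirectLimit.of M fM i (r • m))
    (hSN : ∀ i (r : R i) (n : N i),
      Ring.DirectLimit.of R (fun i j h => fR i j h) i r •
          AddCommGroup.DirectLimit.of N fN i n =
        AddCommGroup.DirectLimit.of N fN i (r • n)) :
    ∃ eIso : AddCommGroup.DirectLimit (fun i => TensorProduct (R i) (M i) (N i)) fT ≃+
        TensorProduct (Ring.DirectLimit R fun i j h => fR i j h)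
          (AddCommGroup.DirectLimit M fM) (AddCommGroup.DirectLimit N fN),
      ∀ i (m : M i) (n : N i),
        eIso (AddCommGroup.DirectLimit.of
            (fun i => TensorProduct (R i) (M i) (N i)) fT i (m ⊗ₜ[R i] n)) =
          AddCommGroup.DirectLimit.of M fM i m ⊗ₜ AddCommGroup.DirectLimit.of N fN i n := by
  exact ⟨AddEquiv.mk
    ⟨DLT.e hT hSM hSN,
      TensorProduct.liftAddHom (DLT.B hT) (fun s x y => DLT.B_balance hT hSM hSN hM hN s x y),
      DLT.left_inv hT hSM hSN hM hN, DLT.right_inv hT hSM hSN hM hN⟩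
    (map_add _),
    fun i m n => DLT.e_of_tmul hT hSM hSN i m n⟩
end

section
/- Let R be a Noetherian ring of characteristic p, M a finitely generated R-module with a surjective additive map κ: M → M satisfying κ(r^p m) = r κ(m) (an F-pure Cartier module), t ∈ Q_{≥0}, and f ∈ R a nonzerodivisor on M. Then for every l ≥ 0, κ^e(f^{⌈t p^e⌉} f^l M) ⊆ κ^{e+1}(f^{⌈t p^{e+1}⌉} f^l M) for all e, and this ascending chain of submodules stabilizes for e ≫ 0. -/
/-- Let `R` be a Noetherian ring of characteristic `p`, `M` a finitely generated
`R`-module and `κ : M → M` a surjective additive map with `κ(r^p • m) = r • κ(m)`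
(an `F`-pure Cartier module).  Let `t ∈ ℚ_{≥0}` and `f ∈ R` a nonzerodivisor on `M`.
Then for every `l ≥ 0` the submodules `κ^e(f^{⌈t p^e⌉} f^l M)` form an ascending chain
in `e`, which stabilizes for `e ≫ 0`. -/
theorem cartier_iterate_ascending_chain (R : Type*) [CommRing R] [IsNoetherianRing R]
    (p : ℕ) [Fact p.Prime] [CharP R p]
    (M : Type*) [AddCommGroup M] [Module R M] [Module.Finite R M]
    (κ : M →+ M) (hκ : ∀ (r : R) (m : M), κ (r ^ p • m) = r • κ m)
    (hsurj : Function.Surjective κ)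
    (t : ℚ) (ht : 0 ≤ t) (f : R) (hf : ∀ m : M, f • m = 0 → m = 0) (l : ℕ) :
    (∀ e : ℕ,
        Set.range (fun m : M => (⇑κ)^[e] ((f ^ (⌈t * (p : ℚ) ^ e⌉₊) * f ^ l) • m)) ⊆
          Set.range (fun m : M => (⇑κ)^[e + 1] ((f ^ (⌈t * (p : ℚ) ^ (e + 1)⌉₊) * f ^ l) • m))) ∧
      ∃ e₀ : ℕ, ∀ e ≥ e₀,
        Set.range (fun m : M => (⇑κ)^[e] ((f ^ (⌈t * (p : ℚ) ^ e⌉₊) * f ^ l) • m)) =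
          Set.range (fun m : M => (⇑κ)^[e₀] ((f ^ (⌈t * (p : ℚ) ^ e₀⌉₊) * f ^ l) • m)) := by
  classical
  have hp : p.Prime := Fact.out
  set a : ℕ → ℕ := fun e => ⌈t * (p : ℚ) ^ e⌉₊ with ha
  -- iterated Cartier rule
  have hiter : ∀ (e : ℕ) (r : R) (m : M), (⇑κ)^[e] (r ^ p ^ e • m) = r • (⇑κ)^[e] m := by
    intro e
    induction e with
    | zero => intro r m; simp
    | succ e ih =>
      intro r m
      rw [Function.iterate_succ_apply, Function.iterate_succ_apply]
      have h1 : r ^ p ^ (e + 1) = (r ^ p ^ e) ^ p := by rw [← pow_mul, pow_succ]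
      rw [h1, hκ (r ^ p ^ e) m, ih]
  -- the ranges are submodules
  let S : ℕ → Submodule R M := fun e =>
    { carrier := Set.range (fun m : M => (⇑κ)^[e] ((f ^ a e * f ^ l) • m))
      add_mem' := by
        rintro x y ⟨m₁, rfl⟩ ⟨m₂, rfl⟩
        exact ⟨m₁ + m₂, by simp only [smul_add]; exact iterate_map_add κ e _ _⟩
      zero_mem' := ⟨0, by simp⟩
      smul_mem' := by
        rintro r x ⟨m, rfl⟩
        refine ⟨r ^ p ^ e • m, ?_⟩
        show (⇑κ)^[e] ((f ^ a e * f ^ l) • r ^ p ^ e • m)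
            = r • (⇑κ)^[e] ((f ^ a e * f ^ l) • m)
        rw [smul_comm, hiter] }
  -- key exponent inequality
  have key : ∀ e, a (e + 1) ≤ p * a e := by
    intro e
    apply Nat.ceil_le.mpr
    push_cast
    calc t * (p : ℚ) ^ (e + 1) = (p : ℚ) * (t * (p : ℚ) ^ e) := by ring
      _ ≤ (p : ℚ) * ⌈t * (p : ℚ) ^ e⌉₊ :=
          mul_le_mul_of_nonneg_left (Nat.le_ceil _) (by positivity)
  -- the ascending chain step
  have hstep : ∀ e, S e ≤ S (e + 1) := by
    intro e x hx
    obtain ⟨m, rfl⟩ := hx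
    obtain ⟨m', rfl⟩ := hsurj m
    have hle : a (e + 1) + l ≤ p * (a e + l) := by
      have h1 := key e
      have h2 : l ≤ p * l := Nat.le_mul_of_pos_left l hp.pos
      have h0 : p * (a e + l) = p * a e + p * l := Nat.mul_add _ _ _
      omega
    refine ⟨f ^ (p * (a e + l) - (a (e + 1) + l)) • m', ?_⟩
    show (⇑κ)^[e + 1] ((f ^ a (e + 1) * f ^ l) • f ^ (p * (a e + l) - (a (e + 1) + l)) • m')
        = (⇑κ)^[e] ((f ^ a e * f ^ l) • κ m')
    rw [Function.iterate_succ_apply]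
    congr 1
    have h3 : (f ^ a (e + 1) * f ^ l) • f ^ (p * (a e + l) - (a (e + 1) + l)) • m'
        = (f ^ (a e + l)) ^ p • m' := by
      rw [smul_smul, ← pow_add, ← pow_add, ← pow_mul']
      have h5 : a (e + 1) + l + (p * (a e + l) - (a (e + 1) + l)) = p * (a e + l) := by
        rw [Nat.add_sub_cancel' hle]
      rw [h5]
    rw [h3, hκ, ← pow_add]
  refine ⟨fun e => hstep e, ?_⟩
  obtain ⟨e₀, he₀⟩ := monotone_stabilizes_iff_noetherian.mpr inferInstance
    ⟨S, monotone_nat_of_le_succ hstep⟩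
  refine ⟨e₀, fun e he => ?_⟩
  have h : S e₀ = S e := he₀ e he
  show (S e : Set M) = (S e₀ : Set M)
  exact congrArg (fun s : Submodule R M => (s : Set M)) h.symm
end
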